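/- Extreme component of the special basis: let β = (n,…,n, n−1,…,n−1, …, 1,…,1) be the multi-index consisting of decreasing blocks, each value repeated m times, and let J_i^β = { j : β_j = i }. Then w_β^{β}(z_1,…,z_N) = Π_{i<j} Π_{k∈J_i^β, l∈J_j^β} b(z_k/z_l), where b(z) = (1−z)q/(1−zq²). -/

import Mathlib

noncomputable section

/-- Entries of the trigonometric R-matrix of the vector representation of
`U_q(sl_n^)`: the row index is `(ε₁, ε₂)`, the column index is `(ε'₁, ε'₂)`. -/
def Rent (n : ℕ) (q z : ℂ) (r c : Fin n × Fin n) : ℂ :=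
  if r = c then (if r.1 = r.2 then 1 else (1 - z) * q / (1 - z * q ^ 2))
  else if r.1 = c.2 ∧ r.2 = c.1 then
    (if r.1 < r.2 then (1 - q ^ 2) * z / (1 - z * q ^ 2) else (1 - q ^ 2) / (1 - z * q ^ 2))
  else 0

/-- `R_{ab}(z)` acting on `V^{⊗N}`. -/
def Rop (n : ℕ) (q : ℂ) (N : ℕ) (a b : Fin N) (z : ℂ) :
    Matrix (Fin N → Fin n) (Fin N → Fin n) ℂ :=
  Matrix.of fun ε ε' => Rent n q z (ε a, ε b) (ε' a, ε' b) *
    ∏ i ∈ Finset.univ.filter (fun i => i ≠ a ∧ i ≠ b), (if ε i = ε' i then (1 : ℂ) else 0)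

/-- The operator `R_{1,N+1}(z₁/t) ⋯ R_{N,N+1}(z_N/t)` on `V^{⊗(N+1)}`. -/
def BigR (n : ℕ) (q : ℂ) (N : ℕ) (z : Fin N → ℂ) (t : ℂ) :
    Matrix (Fin (N + 1) → Fin n) (Fin (N + 1) → Fin n) ℂ :=
  ((List.finRange N).map (fun (j : Fin N) =>
    Rop n q (N + 1) j.castSucc (Fin.last N) (z j / t))).prod

/-- The quantum monodromy operator `T_{εε'}(z₁,…,z_N | t) ∈ End(V^{⊗N})`:
the `(ε, ε')` block of `BigR` with respect to the basis of the last factor. -/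
def Tmat (n : ℕ) (q : ℂ) (N : ℕ) (z : Fin N → ℂ) (t : ℂ) (e e' : Fin n) :
    Matrix (Fin N → Fin n) (Fin N → Fin n) ℂ :=
  Matrix.of fun a b => BigR n q N z t (Fin.snoc a e) (Fin.snoc b e')

/-- The vacuum vector `Ω = v₁ ⊗ ⋯ ⊗ v₁`. -/
def Omega (n N : ℕ) : (Fin N → Fin n) → ℂ :=
  fun ε => if ∀ j, (ε j : ℕ) = 0 then 1 else 0

/-- The special basis vector
`w_α = Π_l T_{1n}(z|z_l^{(n)}) ⋯ Π_l T_{12}(z|z_l^{(2)}) Ω`, where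
`z_1^{(i)}, …, z_m^{(i)}` is the subsequence of the `z_j` at positions `j`
with `α_j = i` (values in `Fin n`, i.e. `v_i ↔ i - 1`). -/
def wvec (n : ℕ) (hn : 0 < n) (q : ℂ) (N : ℕ) (α : Fin N → Fin n) (z : Fin N → ℂ) :
    (Fin N → Fin n) → ℂ :=
  (((((List.finRange n).reverse.dropLast)).map (fun c =>
      ((List.finRange N).filter (fun j => α j = c)).map
        (fun j => Tmat n q N z (z j) ⟨0, hn⟩ c))).flatten).prod.mulVec (Omega n N)


/-- `b(z) = (1-z)q/(1-zq²)`. -/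
def bfun (q z : ℂ) : ℂ := (1 - z) * q / (1 - z * q ^ 2)

namespace ExtremeAux


lemma nat_div_eq_iff {m : ℕ} (hm : 0 < m) (j t : ℕ) :
    j / m = t ↔ t * m ≤ j ∧ j < t * m + m := by
  constructor
  · rintro rfl
    refine ⟨Nat.div_mul_le_self _ _, ?_⟩
    have h1 := Nat.div_add_mod j m
    have h2 := Nat.mod_lt j hm
    calc j = m * (j / m) + j % m := h1.symm
      _ < m * (j / m) + m := by omega
      _ = j / m * m + m := by ring
  · rintro ⟨h1, h2⟩
    exact Nat.div_eq_of_lt_le h1 (by rw [Nat.succ_mul]; omega)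

variable {n : ℕ}

lemma Rent_diag_same (q zz : ℂ) (e : Fin n) (col : Fin n × Fin n) :
    Rent n q zz (e, e) col = if col = (e, e) then 1 else 0 := by
  by_cases hc : col = (e, e)
  · subst hc; simp [Rent]
  · have h1 : ((e, e) : Fin n × Fin n) ≠ col := fun h => hc h.symm
    have h2 : ¬(((e, e) : Fin n × Fin n).1 = col.2 ∧ ((e, e) : Fin n × Fin n).2 = col.1) := by
      rintro ⟨u, v⟩
      exact hc (Prod.ext_iff.mpr ⟨v.symm, u.symm⟩)
    rw [Rent, if_neg h1, if_neg h2, if_neg hc]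

lemma Rent_one_swap (q : ℂ) (hq2 : 1 - q ^ 2 ≠ 0) (a₁ a₂ : Fin n) (h : a₁ ≠ a₂)
    (col : Fin n × Fin n) :
    Rent n q 1 (a₁, a₂) col = if col = (a₂, a₁) then 1 else 0 := by
  have hone : (1 : ℂ) - 1 * q ^ 2 = 1 - q ^ 2 := by ring
  by_cases hc : col = (a₂, a₁)
  · subst hc
    have hne : ((a₁, a₂) : Fin n × Fin n) ≠ (a₂, a₁) := by
      intro hcc
      exact h (congrArg Prod.fst hcc)
    rw [Rent, if_neg hne, if_pos ⟨rfl, rfl⟩, if_pos rfl]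
    split_ifs
    · rw [hone, mul_one, div_self hq2]
    · rw [hone, div_self hq2]
  · rw [if_neg hc]
    by_cases hd : col = (a₁, a₂)
    · subst hd
      rw [Rent, if_pos rfl, if_neg h]
      norm_num
    · have h1 : ((a₁, a₂) : Fin n × Fin n) ≠ col := fun hh => hd hh.symm
      have h2 : ¬(((a₁, a₂) : Fin n × Fin n).1 = col.2 ∧ ((a₁, a₂) : Fin n × Fin n).2 = col.1) := by
        rintro ⟨u, v⟩
        exact hc (Prod.ext_iff.mpr ⟨v.symm, u.symm⟩)
      rw [Rent, if_neg h1, if_neg h2]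

lemma Rent_diag_ne (q zz : ℂ) (v w : Fin n) (h : v ≠ w) :
    Rent n q zz (v, w) (v, w) = bfun q zz := by
  simp [Rent, bfun, h]

lemma Rent_support (q zz : ℂ) (r col : Fin n × Fin n) (h : Rent n q zz r col ≠ 0) :
    col = r ∨ col = (r.2, r.1) := by
  by_contra hc
  push_neg at hc
  obtain ⟨h1, h2⟩ := hc
  apply h
  rw [Rent, if_neg (fun e => h1 e.symm), if_neg ?_]
  rintro ⟨u, v⟩
  exact h2 (Prod.ext_iff.mpr ⟨v.symm, u.symm⟩)

lemma Rop_apply (q zz : ℂ) (M : ℕ) (a b : Fin M) (x y : Fin M → Fin n) :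
    Rop n q M a b zz x y = Rent n q zz (x a, x b) (y a, y b) *
      ∏ i ∈ Finset.univ.filter (fun i => i ≠ a ∧ i ≠ b), (if x i = y i then (1:ℂ) else 0) := rfl

lemma Rop_apply_agree (q zz : ℂ) {M : ℕ} (a b : Fin M) {x y : Fin M → Fin n}
    (h : ∀ i, i ≠ a → i ≠ b → x i = y i) :
    Rop n q M a b zz x y = Rent n q zz (x a, x b) (y a, y b) := by
  rw [Rop_apply, Finset.prod_eq_one, mul_one]
  intro i hi
  simp only [Finset.mem_filter] at hi
  rw [if_pos (h i hi.2.1 hi.2.2)]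

lemma Rop_ne_zero (q zz : ℂ) {M : ℕ} {a b : Fin M} {x y : Fin M → Fin n}
    (h : Rop n q M a b zz x y ≠ 0) :
    (∀ i, i ≠ a → i ≠ b → x i = y i) ∧ Rent n q zz (x a, x b) (y a, y b) ≠ 0 := by
  rw [Rop_apply] at h
  constructor
  · intro i hia hib
    by_contra hne
    apply h
    rw [Finset.prod_eq_zero (i := i) (by simp [hia, hib]) (by rw [if_neg hne]), mul_zero]
  · exact fun h0 => h (by rw [h0, zero_mul])

lemma Rop_row_delta (q zz : ℂ) {M : ℕ} {a b : Fin M} (hab : a ≠ b) {x : Fin M → Fin n}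
    {u₁ u₂ : Fin n}
    (hrow : ∀ col, Rent n q zz (x a, x b) col = if col = (u₁, u₂) then 1 else 0)
    (y : Fin M → Fin n) :
    Rop n q M a b zz x y =
      if y = Function.update (Function.update x a u₁) b u₂ then 1 else 0 := by
  set tgt := Function.update (Function.update x a u₁) b u₂ with htgt
  have hta : tgt a = u₁ := by
    rw [htgt, Function.update_of_ne hab, Function.update_self]
  have htb : tgt b = u₂ := Function.update_self _ _ _
  have htoff : ∀ i, i ≠ a → i ≠ b → tgt i = x i := by
    intro i hia hib
    rw [htgt, Function.update_of_ne hib, Function.update_of_ne hia]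
  by_cases hy : y = tgt
  · subst hy
    rw [if_pos rfl, Rop_apply_agree _ _ _ _ (fun i hia hib => (htoff i hia hib).symm),
      hrow, if_pos (Prod.ext_iff.mpr ⟨hta, htb⟩)]
  · rw [if_neg hy]
    by_contra h0
    obtain ⟨hagree, hRent⟩ := Rop_ne_zero _ _ h0
    rw [hrow] at hRent
    have hcol : ((y a, y b) : Fin n × Fin n) = (u₁, u₂) := by
      by_contra hc
      rw [if_neg hc] at hRent
      exact hRent rfl
    apply hy
    funext i
    by_cases hia : i = a
    · subst hia; rw [hta]; exact congrArg Prod.fst hcol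
    by_cases hib : i = b
    · subst hib; rw [htb]; exact congrArg Prod.snd hcol
    · rw [htoff i hia hib]; exact (hagree i hia hib).symm

lemma sum_delta_mul {S : Type*} [Fintype S] [DecidableEq S] (w : S) (g : S → ℂ) :
    (∑ x, (if x = w then (1:ℂ) else 0) * g x) = g w := by
  simp [ite_mul]


def Pp (n : ℕ) (q : ℂ) (N : ℕ) (z : Fin N → ℂ) (t : ℂ) (j : ℕ) :
    Matrix (Fin (N + 1) → Fin n) (Fin (N + 1) → Fin n) ℂ :=
  (((List.finRange N).take j).map (fun p =>
    Rop n q (N + 1) p.castSucc (Fin.last N) (z p / t))).prod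

lemma Pp_zero (n : ℕ) (q : ℂ) (N : ℕ) (z : Fin N → ℂ) (t : ℂ) : Pp n q N z t 0 = 1 := by
  simp [Pp]

lemma Pp_succ (n : ℕ) (q : ℂ) (N : ℕ) (z : Fin N → ℂ) (t : ℂ) {j : ℕ} (hj : j < N) :
    Pp n q N z t (j + 1) = Pp n q N z t j *
      Rop n q (N + 1) (⟨j, hj⟩ : Fin N).castSucc (Fin.last N) (z ⟨j, hj⟩ / t) := by
  unfold Pp
  rw [List.take_succ, List.getElem?_eq_getElem (by simpa using hj)]
  rw [List.map_append, List.prod_append]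
  congr 1
  simp [List.getElem_finRange, Fin.cast]

lemma BigR_eq_Pp (n : ℕ) (q : ℂ) (N : ℕ) (z : Fin N → ℂ) (t : ℂ) :
    BigR n q N z t = Pp n q N z t N := by
  unfold BigR Pp
  rw [List.take_of_length_le (by simp)]

lemma Pp_support (q : ℂ) {N : ℕ} (z : Fin N → ℂ) (t : ℂ) :
    ∀ j (x y : Fin (N + 1) → Fin n), Pp n q N z t j x y ≠ 0 →
      ∀ p : Fin N, j ≤ (p : ℕ) → y p.castSucc = x p.castSucc := by
  intro j
  induction j with
  | zero =>
    intro x y h p _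
    rw [Pp_zero, Matrix.one_apply] at h
    have hxy : x = y := by
      by_contra hc
      rw [if_neg hc] at h
      exact h rfl
    rw [hxy]
  | succ j ih =>
    intro x y h p hp
    have hjN : j < N := lt_of_lt_of_le (Nat.lt_of_lt_of_le (Nat.lt_succ_self j) hp) (Nat.le_of_lt p.isLt)
    rw [Pp_succ _ _ _ _ _ hjN, Matrix.mul_apply] at h
    obtain ⟨w, -, hw⟩ := Finset.exists_ne_zero_of_sum_ne_zero h
    have h1 : Pp n q N z t j x w ≠ 0 := fun h0 => hw (by rw [h0, zero_mul])
    have h2 := (Rop_ne_zero (x := w) (y := y) q _ (fun h0 => hw (by rw [h0, mul_zero]))).1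
    have e1 : w p.castSucc = y p.castSucc := by
      apply h2
      · intro hcc
        have : (p : ℕ) = j := by
          have := congrArg Fin.val hcc
          simpa using this
        omega
      · intro hcc
        have h3 := congrArg Fin.val hcc
        have h4 := p.isLt
        simp at h3
        omega
    rw [← e1]
    exact ih x w h1 p (by omega)


set_option maxHeartbeats 1000000 in
lemma Trow (n m N : ℕ) (hn : 2 ≤ n) (hm : 1 ≤ m) (hN : N = m * n) (hn0 : 0 < n)
    (q : ℂ) (hq2 : (1:ℂ) - q ^ 2 ≠ 0) (z : Fin N → ℂ) (hz : ∀ j, z j ≠ 0)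
    (β : Fin N → Fin n) (hβ : ∀ j : Fin N, (β j : ℕ) = n - 1 - ((j : ℕ) / m))
    (k : ℕ) (hk : k < (n - 1) * m) (hkN : k < N) (b : Fin N → Fin n) :
    Tmat n q N z (z ⟨k, hkN⟩) ⟨0, hn0⟩ (β ⟨k, hkN⟩)
        (fun p : Fin N => if (p : ℕ) < k then ⟨0, hn0⟩ else β p) b
      = (∏ p ∈ Finset.univ.filter (fun p : Fin N => β p < β ⟨k, hkN⟩),
          bfun q (z p / z ⟨k, hkN⟩)) *
        (if b = (fun p : Fin N => if (p : ℕ) < k + 1 then ⟨0, hn0⟩ else β p) then 1 else 0) := by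
  have hm0 : 0 < m := hm
  set z0 : Fin n := ⟨0, hn0⟩ with hz0
  set kf : Fin N := ⟨k, hkN⟩ with hkf
  set c : Fin n := β kf with hc
  set t : ℂ := z kf with ht
  have hkfv : (kf : ℕ) = k := rfl
  set σk : Fin N → Fin n := fun p : Fin N => if (p : ℕ) < k then z0 else β p with hσk
  set σk1 : Fin N → Fin n := fun p : Fin N => if (p : ℕ) < k + 1 then z0 else β p with hσk1
  set x₀ : Fin (N + 1) → Fin n := Fin.snoc σk z0 with hx₀
  set x₁ : Fin (N + 1) → Fin n := Fin.snoc σk1 c with hx₁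
  -- arithmetic facts
  have hdivlt : ∀ p : Fin N, (p : ℕ) / m < n := by
    intro p
    rw [Nat.div_lt_iff_lt_mul hm0]
    have hcomm : n * m = m * n := Nat.mul_comm n m
    have := p.isLt
    omega
  have hdivk : k / m < n - 1 := by
    rw [Nat.div_lt_iff_lt_mul hm0]
    exact hk
  have hcval : (c : ℕ) = n - 1 - k / m := hβ kf
  have hc1 : 1 ≤ (c : ℕ) := by
    rw [hcval]
    obtain ⟨A, hA⟩ : ∃ A, k / m = A := ⟨_, rfl⟩
    rw [hA] at hdivk ⊢
    omega
  have hcz0 : c ≠ z0 := by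
    intro h
    have := congrArg Fin.val h
    rw [hz0] at this
    simp at this
    omega
  set E : ℕ := (k / m + 1) * m with hE
  have hkE : k / m * m ≤ k ∧ k < k / m * m + m := (nat_div_eq_iff hm0 k _).mp rfl
  have hkltE : k < E := by rw [hE, Nat.succ_mul]; omega
  have hEN : E ≤ N := by
    have h1 : (k / m + 1) * m ≤ (n - 1) * m := Nat.mul_le_mul_right m hdivk
    have h2 : (n - 1) * m ≤ n * m := Nat.mul_le_mul_right m (by omega)
    have h3 : n * m = m * n := Nat.mul_comm _ _
    omega
  have hblockβ : ∀ p : Fin N, k ≤ (p : ℕ) → (p : ℕ) < E → β p = c := by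
    intro p h1 h2
    have hdiv : (p : ℕ) / m = k / m := by
      apply (nat_div_eq_iff hm0 _ _).mpr
      rw [hE, Nat.succ_mul] at h2
      exact ⟨by omega, by omega⟩
    apply Fin.ext_iff.mpr
    rw [hβ p, hcval, hdiv]
  have hafter : ∀ p : Fin N, E ≤ (p : ℕ) → (β p : ℕ) < (c : ℕ) := by
    intro p h1
    have hdiv : k / m + 1 ≤ (p : ℕ) / m := (Nat.le_div_iff_mul_le hm0).mpr (by rw [hE] at h1; omega)
    rw [hβ p, hcval]
    obtain ⟨A, hA⟩ : ∃ A, k / m = A := ⟨_, rfl⟩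
    obtain ⟨B, hB⟩ : ∃ B, (p : ℕ) / m = B := ⟨_, rfl⟩
    rw [hA, hB] at hdiv ⊢
    rw [hA] at hdivk
    omega
  have hbefore : ∀ p : Fin N, (p : ℕ) < E → (c : ℕ) ≤ (β p : ℕ) := by
    intro p h1
    have hdiv : (p : ℕ) / m < k / m + 1 := by
      rw [Nat.div_lt_iff_lt_mul hm0]
      rw [hE] at h1
      omega
    rw [hβ p, hcval]
    have hd2 := hdivlt p
    obtain ⟨A, hA⟩ : ∃ A, k / m = A := ⟨_, rfl⟩
    obtain ⟨B, hB⟩ : ∃ B, (p : ℕ) / m = B := ⟨_, rfl⟩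
    rw [hA, hB] at hdiv ⊢
    rw [hB] at hd2
    omega
  -- state facts
  have hx₀cs : ∀ p : Fin N, x₀ p.castSucc = σk p := by
    intro p; rw [hx₀]; exact Fin.snoc_castSucc _ _ _
  have hx₀l : x₀ (Fin.last N) = z0 := by rw [hx₀]; exact Fin.snoc_last _ _
  have hx₁cs : ∀ p : Fin N, x₁ p.castSucc = σk1 p := by
    intro p; rw [hx₁]; exact Fin.snoc_castSucc _ _ _
  have hx₁l : x₁ (Fin.last N) = c := by rw [hx₁]; exact Fin.snoc_last _ _
  -- Phase 1
  have P1 : ∀ j, j ≤ k → ∀ y, Pp n q N z t j x₀ y = if y = x₀ then 1 else 0 := by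
    intro j
    induction j with
    | zero =>
      intro _ y
      rw [Pp_zero, Matrix.one_apply]
      simp [eq_comm]
    | succ j ih =>
      intro hj y
      have hjN : j < N := by omega
      rw [Pp_succ _ _ _ _ _ hjN, Matrix.mul_apply]
      simp only [ih (by omega)]
      rw [sum_delta_mul]
      have hra : x₀ (⟨j, hjN⟩ : Fin N).castSucc = z0 := by
        rw [hx₀cs]
        simp only [hσk]
        exact if_pos (by show j < k; omega)
      have hrb : x₀ (Fin.last N) = z0 := hx₀l
      rw [Rop_row_delta q _ (ne_of_lt (Fin.castSucc_lt_last _))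
        (fun col => by rw [hra, hrb]; exact Rent_diag_same q _ z0 col) y]
      have e1 : Function.update x₀ (⟨j, hjN⟩ : Fin N).castSucc z0 = x₀ := by
        conv_lhs => rw [← hra]
        exact Function.update_eq_self _ _
      rw [e1]
      have e2 : Function.update x₀ (Fin.last N) z0 = x₀ := by
        conv_lhs => rw [← hrb]
        exact Function.update_eq_self _ _
      rw [e2]
  -- Phase 2
  have hX1 : Function.update (Function.update x₀ kf.castSucc z0) (Fin.last N) c = x₁ := by
    funext i
    refine Fin.lastCases ?_ ?_ i
    · rw [Function.update_self, hx₁l]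
    · intro p
      rw [Function.update_of_ne (ne_of_lt (Fin.castSucc_lt_last _))]
      by_cases hp : p = kf
      · subst hp
        rw [Function.update_self, hx₁cs]
        simp only [hσk1]
        exact (if_pos (by omega)).symm
      · rw [Function.update_of_ne (fun hcc => hp (Fin.castSucc_injective _ hcc))]
        rw [hx₀cs, hx₁cs]
        simp only [hσk, hσk1]
        have hpk : (p : ℕ) ≠ k := fun h => hp (Fin.ext_iff.mpr (by rw [h, hkf]))
        have hz' := hpk
        by_cases h2 : (p : ℕ) < k
        · rw [if_pos h2, if_pos (by omega)]
        · rw [if_neg h2, if_neg (by omega)]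
  have P2 : ∀ y, Pp n q N z t (k + 1) x₀ y = if y = x₁ then 1 else 0 := by
    intro y
    rw [Pp_succ _ _ _ _ _ hkN, Matrix.mul_apply]
    simp only [P1 k le_rfl]
    rw [sum_delta_mul, ← hkf]
    have hzz : z kf / t = 1 := by rw [ht]; exact div_self (hz kf)
    rw [hzz]
    have hra : x₀ kf.castSucc = c := by
      rw [hx₀cs]
      simp only [hσk]
      rw [if_neg (by omega), hc]
    rw [Rop_row_delta q _ (ne_of_lt (Fin.castSucc_lt_last _))
      (fun col => by rw [hra, hx₀l]; exact Rent_one_swap q hq2 c z0 hcz0 col) y]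
    rw [hX1]
  -- Phase 3a
  have P3a : ∀ j (hj1 : k + 1 ≤ j), j ≤ E → ∀ y, Pp n q N z t j x₀ y = if y = x₁ then 1 else 0 := by
    intro j hj1
    induction j, hj1 using Nat.le_induction with
    | base => intro _; exact P2
    | succ j hj ih =>
      intro hjE y
      have hjN : j < N := by omega
      rw [Pp_succ _ _ _ _ _ hjN, Matrix.mul_apply]
      simp only [ih (by omega)]
      rw [sum_delta_mul]
      set jf : Fin N := ⟨j, hjN⟩ with hjf
      have hjfv : (jf : ℕ) = j := rfl
      have hxa : x₁ jf.castSucc = c := by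
        rw [hx₁cs]
        simp only [hσk1]
        rw [if_neg (by omega)]
        exact hblockβ jf (by omega) (by omega)
      have hxl : x₁ (Fin.last N) = c := hx₁l
      rw [Rop_row_delta q _ (ne_of_lt (Fin.castSucc_lt_last _))
        (fun col => by rw [hxa, hxl]; exact Rent_diag_same q _ c col) y]
      have e1 : Function.update x₁ jf.castSucc c = x₁ := by
        conv_lhs => rw [← hxa]
        exact Function.update_eq_self _ _
      rw [e1]
      have e2 : Function.update x₁ (Fin.last N) c = x₁ := by
        conv_lhs => rw [← hxl]
        exact Function.update_eq_self _ _
      rw [e2]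
  -- Phase 3b
  have P3b : ∀ j (hj1 : E ≤ j), j ≤ N → ∀ y : Fin (N + 1) → Fin n, y (Fin.last N) = c →
      Pp n q N z t j x₀ y =
        (∏ p ∈ Finset.univ.filter (fun p : Fin N => E ≤ (p : ℕ) ∧ (p : ℕ) < j),
          bfun q (z p / t)) * (if y = x₁ then 1 else 0) := by
    intro j hj1
    induction j, hj1 using Nat.le_induction with
    | base =>
      intro _ y hyl
      have hfe : Finset.univ.filter (fun p : Fin N => E ≤ (p : ℕ) ∧ (p : ℕ) < E) = ∅ :=
        Finset.filter_eq_empty_iff.mpr (by intro p _; omega)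
      rw [hfe, Finset.prod_empty, one_mul]
      exact P3a E (by omega) le_rfl y
    | succ j hj ih =>
      intro hjN1 y hyl
      have hjN : j < N := by omega
      rw [Pp_succ _ _ _ _ _ hjN, Matrix.mul_apply]
      set jf : Fin N := ⟨j, hjN⟩ with hjf
      have hjfv : (jf : ℕ) = j := rfl
      have hβjf : (β jf : ℕ) < (c : ℕ) := hafter jf (by omega)
      rw [Finset.sum_eq_single y ?van ?notmem]
      case van =>
        intro x _ hxy
        by_contra h0
        have hP : Pp n q N z t j x₀ x ≠ 0 := left_ne_zero_of_mul h0
        have hR := right_ne_zero_of_mul h0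
        obtain ⟨hagree, hRent⟩ := Rop_ne_zero q _ hR
        rcases Rent_support _ _ _ _ hRent with hcol | hcol
        · apply hxy
          funext i
          refine Fin.lastCases ?_ ?_ i
          · exact (congrArg Prod.snd hcol).symm
          · intro p
            by_cases hp : p = jf
            · subst hp
              exact (congrArg Prod.fst hcol).symm
            · exact hagree p.castSucc
                (fun hcc => hp (Fin.castSucc_injective _ hcc))
                (ne_of_lt (Fin.castSucc_lt_last _))
        · have h1 : x jf.castSucc = c := by
            have := congrArg Prod.snd hcol
            simp only at this
            rw [← this, hyl]
          have h2 : x jf.castSucc = x₀ jf.castSucc :=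
            Pp_support q z t j x₀ x hP jf (by omega)
          rw [hx₀cs] at h2
          simp only [hσk] at h2
          rw [if_neg (by omega)] at h2
          rw [h1] at h2
          have := congrArg Fin.val h2
          omega
      case notmem =>
        intro hy
        exact absurd (Finset.mem_univ y) hy
      rw [Rop_apply_agree q _ _ _ (fun i _ _ => rfl), hyl]
      by_cases hy : y = x₁
      · subst hy
        have hva : x₁ jf.castSucc = β jf := by
          rw [hx₁cs]
          simp only [hσk1]
          rw [if_neg (by omega)]
        rw [hva, Rent_diag_ne q _ _ _ (fun hh => absurd hβjf (by rw [hh]; exact lt_irrefl _))]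
        rw [ih (by omega) x₁ hx₁l, if_pos rfl]
        have hins : Finset.univ.filter (fun p : Fin N => E ≤ (p : ℕ) ∧ (p : ℕ) < j + 1)
            = insert jf (Finset.univ.filter (fun p : Fin N => E ≤ (p : ℕ) ∧ (p : ℕ) < j)) := by
          ext p
          simp only [Finset.mem_insert, Finset.mem_filter, Finset.mem_univ, true_and,
            Fin.ext_iff, hjf]
          omega
        rw [hins, Finset.prod_insert (by simp; omega)]
        ring
      · rw [ih (by omega) y hyl, if_neg hy]
        ring
  -- conclusion
  have hTB : Tmat n q N z t z0 c σk b = Pp n q N z t N x₀ (Fin.snoc b c) := by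
    rw [show Tmat n q N z t z0 c σk b
        = BigR n q N z t (Fin.snoc σk z0) (Fin.snoc b c) from rfl, BigR_eq_Pp, ← hx₀]
  rw [hTB, P3b N hEN le_rfl _ (Fin.snoc_last _ _)]
  have hset : Finset.univ.filter (fun p : Fin N => E ≤ (p : ℕ) ∧ (p : ℕ) < N)
      = Finset.univ.filter (fun p : Fin N => β p < c) := by
    ext p
    simp only [Finset.mem_filter, Finset.mem_univ, true_and, Fin.lt_def]
    constructor
    · rintro ⟨h1, -⟩
      exact hafter p h1
    · intro h1
      refine ⟨?_, p.isLt⟩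
      by_contra hcc
      push_neg at hcc
      exact absurd h1 (not_lt.mpr (hbefore p hcc))
  rw [hset]
  have hsnoc : (Fin.snoc b c = x₁) ↔ b = σk1 := by
    rw [hx₁]
    constructor
    · intro h
      funext p
      have := congrFun h p.castSucc
      simpa [Fin.snoc_castSucc] using this
    · intro h
      rw [h]
  rw [if_congr hsnoc rfl rfl]


lemma chain {S : Type*} [Fintype S] [DecidableEq S] (F : ℕ → Matrix S S ℂ) (s : ℕ → S)
    (C : ℕ → ℂ) :
    ∀ len lo, (∀ i, lo ≤ i → i < lo + len → ∀ y, F i (s i) y = C i * (if y = s (i + 1) then 1 else 0)) →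
    ∀ y, ((List.range' lo len).map F).prod (s lo) y
      = (∏ i ∈ Finset.Ico lo (lo + len), C i) * (if y = s (lo + len) then 1 else 0) := by
  intro len
  induction len with
  | zero =>
    intro lo _ y
    simp [Matrix.one_apply, eq_comm]
  | succ len ih =>
    intro lo hrow y
    rw [List.range'_succ, List.map_cons, List.prod_cons, Matrix.mul_apply]
    have h1 : ∀ x, F lo (s lo) x = C lo * (if x = s (lo + 1) then 1 else 0) :=
      hrow lo le_rfl (by omega)
    have hsum : ∀ x : S, F lo (s lo) x * ((List.range' (lo + 1) len).map F).prod x y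
        = (if x = s (lo + 1) then C lo * ((List.range' (lo + 1) len).map F).prod x y else 0) := by
      intro x
      rw [h1]
      by_cases hx : x = s (lo + 1)
      · rw [if_pos hx, if_pos hx, mul_one]
      · rw [if_neg hx, if_neg hx, mul_zero, zero_mul]
    simp only [hsum]
    rw [Finset.sum_ite_eq' Finset.univ (s (lo + 1))]
    rw [if_pos (Finset.mem_univ _)]
    rw [ih (lo + 1) (fun i hi1 hi2 => hrow i (by omega) (by omega))]
    have he : lo + 1 + len = lo + (len + 1) := by omega
    rw [he, Finset.prod_eq_prod_Ico_succ_bot (by omega : lo < lo + (len + 1)) C]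
    ring

lemma range_filter_Ico (lo len N : ℕ) (h : lo + len ≤ N) :
    (List.range N).filter (fun i => decide (lo ≤ i ∧ i < lo + len)) = List.range' lo len := by
  have h1 : List.range' 0 lo ++ List.range' lo len = List.range' 0 (len + lo) := by
    have := List.range'_append (s := 0) (m := lo) (n := len) (step := 1)
    rw [Nat.add_comm len lo]
    simpa using this
  have h2 : List.range' 0 (len + lo) ++ List.range' (len + lo) (N - (lo + len))
      = List.range' 0 N := by
    have h3 := List.range'_append (s := 0) (m := len + lo) (n := N - (lo + len)) (step := 1)
    simp only [one_mul, zero_add] at h3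
    rw [h3]
    congr 1
    omega
  have hsplit : List.range N
      = (List.range' 0 lo ++ List.range' lo len) ++ List.range' (len + lo) (N - (lo + len)) := by
    rw [List.range_eq_range', ← h2, h1]
  rw [hsplit, List.filter_append, List.filter_append]
  have e1 : (List.range' 0 lo).filter (fun i => decide (lo ≤ i ∧ i < lo + len)) = [] := by
    rw [List.filter_eq_nil_iff]
    intro a ha
    rw [List.mem_range'_1] at ha
    simp only [decide_eq_true_eq]
    omega
  have e2 : (List.range' lo len).filter (fun i => decide (lo ≤ i ∧ i < lo + len))
      = List.range' lo len := by
    rw [List.filter_eq_self]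
    intro a ha
    rw [List.mem_range'_1] at ha
    simp only [decide_eq_true_eq]
    omega
  have e3 : (List.range' (len + lo) (N - (lo + len))).filter
      (fun i => decide (lo ≤ i ∧ i < lo + len)) = [] := by
    rw [List.filter_eq_nil_iff]
    intro a ha
    rw [List.mem_range'_1] at ha
    simp only [decide_eq_true_eq]
    omega
  rw [e1, e2, e3, List.nil_append, List.append_nil]

lemma NUM (m T : ℕ) : ∀ t, t ≤ T →
    (((List.range' 1 t).reverse.map (fun cv => List.range' ((T - cv) * m) m)).flatten)
      = List.range' ((T - t) * m) (t * m) := by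
  intro t
  induction t with
  | zero => simp
  | succ t ih =>
    intro ht
    rw [List.range'_concat, List.reverse_append, List.reverse_singleton,
      List.singleton_append, List.map_cons, List.flatten_cons, ih (by omega)]
    have e3 : 1 + 1 * t = t + 1 := by omega
    have e2 : (T - t) * m = (T - (t + 1)) * m + 1 * m := by
      have e1 : T - t = (T - (t + 1)) + 1 := by omega
      rw [e1, Nat.succ_mul, one_mul]
    rw [e3, e2, List.range'_append (s := (T - (t + 1)) * m) (m := m) (n := t * m) (step := 1), Nat.succ_mul,
      Nat.add_comm m (t * m)]

end ExtremeAux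

theorem List.map_coe_finRange (n : ℕ) : (List.finRange n).map Fin.val = List.range n :=
  List.ext_getElem (by simp) (by simp)

open ExtremeAux in
theorem extreme_component (n m N : ℕ) (hn : 2 ≤ n) (hm : 1 ≤ m) (hN : N = m * n)
    (q : ℂ) (hq : q ≠ 0) (z : Fin N → ℂ) (hz : ∀ j, z j ≠ 0)
    (hden : ∀ i j : Fin N, 1 - (z i / z j) * q ^ 2 ≠ 0)
    (β : Fin N → Fin n) (hβ : ∀ j : Fin N, (β j : ℕ) = n - 1 - ((j : ℕ) / m)) :
    wvec n (by omega) q N β z β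
      = ∏ p ∈ Finset.univ.filter (fun p : Fin N × Fin N => β p.1 < β p.2),
          bfun q (z p.1 / z p.2) := by
  suffices hgen : ∀ (hn0 : 0 < n), wvec n hn0 q N β z β
      = ∏ p ∈ Finset.univ.filter (fun p : Fin N × Fin N => β p.1 < β p.2),
          bfun q (z p.1 / z p.2) from hgen _
  intro hn0
  have hm0 : 0 < m := hm
  have hNpos : 0 < N := by
    have := Nat.mul_le_mul hm hn
    omega
  have hq2 : (1 : ℂ) - q ^ 2 ≠ 0 := by
    have h := hden ⟨0, hNpos⟩ ⟨0, hNpos⟩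
    rwa [div_self (hz _), one_mul] at h
  have hKN : (n - 1) * m ≤ N := by
    have h2 : (n - 1) * m ≤ n * m := Nat.mul_le_mul_right m (by omega)
    have h3 : n * m = m * n := Nat.mul_comm _ _
    omega
  set z0 : Fin n := ⟨0, hn0⟩ with hz0
  set F : ℕ → Matrix (Fin N → Fin n) (Fin N → Fin n) ℂ :=
    fun i => if h : i < N then Tmat n q N z (z ⟨i, h⟩) z0 (β ⟨i, h⟩) else 1 with hF
  have hdivlt : ∀ p : Fin N, (p : ℕ) / m < n := by
    intro p
    rw [Nat.div_lt_iff_lt_mul hm0]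
    have hcomm : n * m = m * n := Nat.mul_comm n m
    have := p.isLt
    omega
  have hβc : ∀ (cc : Fin n) (j : Fin N), 1 ≤ (cc : ℕ) →
      (β j = cc ↔ ((n - 1 - (cc : ℕ)) * m ≤ (j : ℕ) ∧ (j : ℕ) < (n - 1 - (cc : ℕ)) * m + m)) := by
    intro cc j hcc
    have hccn : (cc : ℕ) < n := cc.isLt
    have hjd := hdivlt j
    constructor
    · intro h
      have hv : n - 1 - (j : ℕ) / m = (cc : ℕ) := by rw [← hβ j, h]
      have hdd : (j : ℕ) / m = n - 1 - (cc : ℕ) := by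
        obtain ⟨B, hB⟩ : ∃ B, (j : ℕ) / m = B := ⟨_, rfl⟩
        rw [hB] at hv hjd ⊢
        omega
      exact (nat_div_eq_iff hm0 (j : ℕ) (n - 1 - (cc : ℕ))).mp hdd
    · intro h
      have hdd : (j : ℕ) / m = n - 1 - (cc : ℕ) := (nat_div_eq_iff hm0 _ _).mpr h
      apply Fin.ext_iff.mpr
      rw [hβ j, hdd]
      omega
  have hinner : ∀ cc : Fin n, 1 ≤ (cc : ℕ) →
      ((List.finRange N).filter (fun j => decide (β j = cc))).map
          (fun j => Tmat n q N z (z j) z0 cc)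
        = (List.range' ((n - 1 - (cc : ℕ)) * m) m).map F := by
    intro cc hcc
    have hmap1 : ((List.finRange N).filter (fun j => decide (β j = cc))).map
          (fun j => Tmat n q N z (z j) z0 cc)
        = ((List.finRange N).filter (fun j => decide (β j = cc))).map
          (fun j : Fin N => F (j : ℕ)) := by
      apply List.map_congr_left
      intro j hj
      have hb : β j = cc := of_decide_eq_true (List.mem_filter.mp hj).2
      rw [hF]
      simp only [j.isLt, dif_pos, Fin.eta, hb]
    rw [hmap1]
    have hfilt : (List.finRange N).filter (fun j => decide (β j = cc))
        = (List.finRange N).filter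
            (fun j : Fin N => decide ((n - 1 - (cc : ℕ)) * m ≤ (j : ℕ) ∧
              (j : ℕ) < (n - 1 - (cc : ℕ)) * m + m)) := by
      apply List.filter_congr
      intro j _
      rw [decide_eq_decide]
      exact hβc cc j hcc
    rw [hfilt, show (fun j : Fin N => F (j : ℕ)) = F ∘ Fin.val from rfl, ← List.map_map]
    congr 1
    have hval2 : ((List.finRange N).filter
          (fun j : Fin N => decide ((n - 1 - (cc : ℕ)) * m ≤ (j : ℕ) ∧
            (j : ℕ) < (n - 1 - (cc : ℕ)) * m + m))).map Fin.val
        = (List.range N).filter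
            (fun i => decide ((n - 1 - (cc : ℕ)) * m ≤ i ∧ i < (n - 1 - (cc : ℕ)) * m + m)) := by
      rw [← List.map_coe_finRange, List.filter_map]
      rfl
    rw [hval2]
    apply range_filter_Ico
    have hb1 : ((n - 1 - (cc : ℕ)) + 1) * m ≤ (n - 1) * m :=
      Nat.mul_le_mul_right m (by omega)
    rw [Nat.succ_mul] at hb1
    omega
  have hcsval : (((List.finRange n).reverse.dropLast).map Fin.val)
      = (List.range' 1 (n - 1)).reverse := by
    rw [List.map_dropLast, List.map_reverse, List.map_coe_finRange, List.dropLast_reverse]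
    congr 1
    obtain ⟨u, hu⟩ : ∃ u, n = u + 1 := ⟨n - 1, by omega⟩
    rw [List.range_eq_range', hu, List.range'_succ]
    simp
  have hcsmem : ∀ cc ∈ (List.finRange n).reverse.dropLast, 1 ≤ (cc : ℕ) := by
    intro cc hcc
    have hmm : (cc : ℕ) ∈ (((List.finRange n).reverse.dropLast).map Fin.val) :=
      List.mem_map_of_mem hcc
    rw [hcsval, List.mem_reverse, List.mem_range'_1] at hmm
    omega
  have hlist : (((List.finRange n).reverse.dropLast).map (fun cc =>
        ((List.finRange N).filter (fun j => decide (β j = cc))).map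
          (fun j => Tmat n q N z (z j) z0 cc))).flatten
      = (List.range' 0 ((n - 1) * m)).map F := by
    rw [List.map_congr_left (fun cc hcc => hinner cc (hcsmem cc hcc))]
    rw [show (fun cc : Fin n => (List.range' ((n - 1 - (cc : ℕ)) * m) m).map F)
        = (List.map F ∘ fun cc : Fin n => List.range' ((n - 1 - (cc : ℕ)) * m) m) from rfl]
    rw [← List.map_map, ← List.map_flatten]
    congr 1
    rw [show (fun cc : Fin n => List.range' ((n - 1 - (cc : ℕ)) * m) m)
        = ((fun cv : ℕ => List.range' ((n - 1 - cv) * m) m) ∘ Fin.val) from rfl]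
    rw [← List.map_map, hcsval]
    have hnum := NUM m (n - 1) (n - 1) le_rfl
    simpa using hnum
  unfold wvec
  rw [← hz0, hlist]
  have hmv : (((List.range' 0 ((n - 1) * m)).map F).prod.mulVec (Omega n N)) β
      = ∑ x : Fin N → Fin n, ((List.range' 0 ((n - 1) * m)).map F).prod β x * Omega n N x := rfl
  rw [hmv]
  have hOm : ∀ x : Fin N → Fin n, Omega n N x
      = if x = (fun _ => z0) then 1 else 0 := by
    intro x
    unfold Omega
    by_cases hx : x = (fun _ => z0)
    · have hall : ∀ j : Fin N, ((x j : ℕ)) = 0 := fun j => by rw [hx]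
      rw [if_pos hall, if_pos hx]
    · have hnall : ¬(∀ j : Fin N, ((x j : ℕ)) = 0) := fun hall =>
        hx (funext fun j => Fin.ext_iff.mpr (by rw [hall j]))
      rw [if_neg hnall, if_neg hx]
  simp only [hOm, mul_ite, mul_one, mul_zero]
  rw [Finset.sum_ite_eq' Finset.univ ((fun _ => z0) : Fin N → Fin n), if_pos (Finset.mem_univ _)]
  set s : ℕ → (Fin N → Fin n) := fun i => fun p : Fin N => if (p : ℕ) < i then z0 else β p with hs
  set C : ℕ → ℂ := fun i => if h : i < N then
      ∏ p ∈ Finset.univ.filter (fun p : Fin N => β p < β ⟨i, h⟩), bfun q (z p / z ⟨i, h⟩)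
    else 1 with hC
  have hrows : ∀ i, 0 ≤ i → i < 0 + (n - 1) * m → ∀ y,
      F i (s i) y = C i * (if y = s (i + 1) then 1 else 0) := by
    intro i _ hiK y
    have hiN : i < N := by omega
    have hT := Trow n m N hn hm hN hn0 q hq2 z hz β hβ i (by omega) hiN y
    simp only [hF, hC, dif_pos hiN]
    exact hT
  have hchain := chain F s C ((n - 1) * m) 0 hrows (fun _ => z0)
  rw [zero_add] at hchain
  have hs0 : s 0 = β := by
    funext p
    show (if (p : ℕ) < 0 then z0 else β p) = β p
    rw [if_neg (by omega)]
  have hsK : s ((n - 1) * m) = (fun _ => z0) := by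
    funext p
    show (if (p : ℕ) < (n - 1) * m then z0 else β p) = z0
    by_cases hp : (p : ℕ) < (n - 1) * m
    · rw [if_pos hp]
    · rw [if_neg hp]
      apply Fin.ext_iff.mpr
      rw [hβ p]
      have hge : n - 1 ≤ (p : ℕ) / m := (Nat.le_div_iff_mul_le hm0).mpr (by omega)
      have hvz : (z0 : ℕ) = 0 := rfl
      rw [hvz]
      obtain ⟨B, hB⟩ : ∃ B, (p : ℕ) / m = B := ⟨_, rfl⟩
      rw [hB] at hge ⊢
      omega
  rw [hs0] at hchain
  rw [hchain, hsK, if_pos rfl, mul_one]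
  have htail : ∀ i ∈ Finset.Ico ((n - 1) * m) N, C i = 1 := by
    intro i hi
    rw [Finset.mem_Ico] at hi
    rw [hC]
    simp only [dif_pos hi.2]
    have hempty : Finset.univ.filter (fun p : Fin N => β p < β ⟨i, hi.2⟩) = ∅ := by
      apply Finset.filter_eq_empty_iff.mpr
      intro p _
      rw [Fin.lt_def]
      have h0 : (β (⟨i, hi.2⟩ : Fin N) : ℕ) = 0 := by
        rw [hβ ⟨i, hi.2⟩]
        have hvv : ((⟨i, hi.2⟩ : Fin N) : ℕ) = i := rfl
        rw [hvv]
        have hge : n - 1 ≤ i / m := (Nat.le_div_iff_mul_le hm0).mpr hi.1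
        obtain ⟨B, hB⟩ : ∃ B, i / m = B := ⟨_, rfl⟩
        rw [hB] at hge ⊢
        omega
      rw [h0]
      omega
    rw [hempty, Finset.prod_empty]
  have hIco : ∏ i ∈ Finset.Ico 0 ((n - 1) * m), C i = ∏ i ∈ Finset.Ico 0 N, C i := by
    rw [← Finset.prod_Ico_consecutive C (Nat.zero_le ((n - 1) * m)) hKN]
    rw [Finset.prod_eq_one htail, mul_one]
  rw [hIco, ← Finset.range_eq_Ico, ← Fin.prod_univ_eq_prod_range C N]
  have hCl : ∀ l : Fin N, C (l : ℕ)
      = ∏ p : Fin N, if β p < β l then bfun q (z p / z l) else 1 := by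
    intro l
    rw [hC]
    simp only [dif_pos l.isLt, Fin.eta]
    rw [Finset.prod_filter]
  simp only [hCl]
  rw [Finset.prod_filter, Fintype.prod_prod_type]
  exact Finset.prod_comm
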